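/- Suppose H = ℝⁿ. Let T : H → H be linear and α-averaged with α ∈ (0,1). Then for every x ∈ H and every k ∈ ℕ, ‖T^k x - P_{Fix T} x‖ ≤ ‖T ∘ P_{(Fix T)^⊥}‖^k · ‖x - P_{Fix T} x‖; consequently T^k x converges linearly to P_{Fix T} x with rate ‖T ∘ P_{(Fix T)^⊥}‖ < 1. -/

import Mathlib

set_option maxHeartbeats 1000000 in
open RealInnerProductSpace in
/-- In `ℝⁿ`, a linear `α`-averaged operator `T` satisfies
`‖T^k x - P_{Fix T} x‖ ≤ ‖T ∘ P_{(Fix T)ᗮ}‖^k ‖x - P_{Fix T} x‖`, and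
`‖T ∘ P_{(Fix T)ᗮ}‖ < 1`, so `T^k x` converges linearly to `P_{Fix T} x`. -/
theorem averaged_linear_convergence {n : ℕ}
    (α : ℝ) (hα : α ∈ Set.Ioo (0 : ℝ) 1)
    (T : EuclideanSpace ℝ (Fin n) →L[ℝ] EuclideanSpace ℝ (Fin n))
    (G : EuclideanSpace ℝ (Fin n) → EuclideanSpace ℝ (Fin n))
    (hG : ∀ x y, ‖G x - G y‖ ≤ ‖x - y‖)
    (hT : ∀ x, T x = (1 - α) • x + α • G x) :
    ‖T ∘L ((LinearMap.ker ((1 - T : EuclideanSpace ℝ (Fin n) →L[ℝ] EuclideanSpace ℝ (Fin n)) : EuclideanSpace ℝ (Fin n) →ₗ[ℝ] EuclideanSpace ℝ (Fin n)))ᗮ.subtypeL ∘L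
        (LinearMap.ker ((1 - T : EuclideanSpace ℝ (Fin n) →L[ℝ] EuclideanSpace ℝ (Fin n)) : EuclideanSpace ℝ (Fin n) →ₗ[ℝ] EuclideanSpace ℝ (Fin n)))ᗮ.orthogonalProjectionOnto)‖ < 1 ∧
    ∀ (x : EuclideanSpace ℝ (Fin n)) (k : ℕ),
      ‖(T ^ k) x - ((LinearMap.ker ((1 - T : EuclideanSpace ℝ (Fin n) →L[ℝ] EuclideanSpace ℝ (Fin n)) : EuclideanSpace ℝ (Fin n) →ₗ[ℝ] EuclideanSpace ℝ (Fin n))).subtypeL ∘L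
          (LinearMap.ker ((1 - T : EuclideanSpace ℝ (Fin n) →L[ℝ] EuclideanSpace ℝ (Fin n)) : EuclideanSpace ℝ (Fin n) →ₗ[ℝ] EuclideanSpace ℝ (Fin n))).orthogonalProjectionOnto) x‖ ≤
        ‖T ∘L ((LinearMap.ker ((1 - T : EuclideanSpace ℝ (Fin n) →L[ℝ] EuclideanSpace ℝ (Fin n)) : EuclideanSpace ℝ (Fin n) →ₗ[ℝ] EuclideanSpace ℝ (Fin n)))ᗮ.subtypeL ∘L
            (LinearMap.ker ((1 - T : EuclideanSpace ℝ (Fin n) →L[ℝ] EuclideanSpace ℝ (Fin n)) : EuclideanSpace ℝ (Fin n) →ₗ[ℝ] EuclideanSpace ℝ (Fin n)))ᗮ.orthogonalProjectionOnto)‖ ^ k *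
          ‖x - ((LinearMap.ker ((1 - T : EuclideanSpace ℝ (Fin n) →L[ℝ] EuclideanSpace ℝ (Fin n)) : EuclideanSpace ℝ (Fin n) →ₗ[ℝ] EuclideanSpace ℝ (Fin n))).subtypeL ∘L
              (LinearMap.ker ((1 - T : EuclideanSpace ℝ (Fin n) →L[ℝ] EuclideanSpace ℝ (Fin n)) : EuclideanSpace ℝ (Fin n) →ₗ[ℝ] EuclideanSpace ℝ (Fin n))).orthogonalProjectionOnto) x‖ := by
  obtain ⟨hα0, hα1⟩ := hα
  set V : Submodule ℝ (EuclideanSpace ℝ (Fin n)) := LinearMap.ker ((1 - T : EuclideanSpace ℝ (Fin n) →L[ℝ] EuclideanSpace ℝ (Fin n)) : EuclideanSpace ℝ (Fin n) →ₗ[ℝ] EuclideanSpace ℝ (Fin n)) with hV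
  set W := Vᗮ with hW
  set P := V.subtypeL ∘L V.orthogonalProjectionOnto with hP
  set Q := W.subtypeL ∘L W.orthogonalProjectionOnto with hQ
  set S := T ∘L Q with hS
  -- G 0 = 0
  have hG0 : G 0 = 0 := by
    have h0 : T 0 = 0 := map_zero T
    rw [hT 0, smul_zero, zero_add] at h0
    rcases smul_eq_zero.mp h0 with h | h
    · exact absurd h (ne_of_gt hα0)
    · exact h
  -- T is nonexpansive
  have hTne : ∀ x : EuclideanSpace ℝ (Fin n), ‖T x‖ ≤ ‖x‖ := by
    intro x
    rw [hT x]
    calc ‖(1 - α) • x + α • G x‖ ≤ ‖(1 - α) • x‖ + ‖α • G x‖ := norm_add_le _ _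
      _ = (1 - α) * ‖x‖ + α * ‖G x‖ := by
          rw [norm_smul, norm_smul, Real.norm_eq_abs, Real.norm_eq_abs,
            abs_of_pos (by linarith), abs_of_pos hα0]
      _ ≤ (1 - α) * ‖x‖ + α * ‖x‖ := by
          have : ‖G x‖ ≤ ‖x‖ := by simpa [hG0] using hG x 0
          nlinarith
      _ = ‖x‖ := by ring
  -- membership in V
  have hmemV : ∀ x, x ∈ V ↔ T x = x := by
    intro x
    rw [hV, LinearMap.mem_ker]
    constructor
    · intro h
      have : x - T x = 0 := by simpa using h
      linear_combination (norm := abel) -this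
    · intro h
      simp [h]
  -- strict contraction off V
  have hstrict : ∀ x : EuclideanSpace ℝ (Fin n), x ∉ V → ‖T x‖ < ‖x‖ := by
    intro x hx
    have hGx : G x ≠ x := by
      intro h
      apply hx
      rw [hmemV, hT x, h]
      module
    have hGle : ‖G x‖ ≤ ‖x‖ := by simpa [hG0] using hG x 0
    rw [hT x]
    exact norm_combo_lt_of_ne le_rfl hGle (Ne.symm hGx) (by linarith) hα0 (by ring)
  -- ‖T‖ ≤ 1
  have hTnorm : ‖T‖ ≤ 1 := T.opNorm_le_bound zero_le_one (by simpa using hTne)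
  -- adjoint fixes V
  have hadj : ∀ v ∈ V, ContinuousLinearMap.adjoint T v = v := by
    intro v hv
    have hTv : T v = v := (hmemV v).mp hv
    have hna : ‖ContinuousLinearMap.adjoint T‖ = ‖T‖ :=
      LinearIsometryEquiv.norm_map ContinuousLinearMap.adjoint T
    have h1 : ‖ContinuousLinearMap.adjoint T v‖ ≤ ‖v‖ := by
      calc ‖ContinuousLinearMap.adjoint T v‖ ≤ ‖ContinuousLinearMap.adjoint T‖ * ‖v‖ :=
            (ContinuousLinearMap.adjoint T).le_opNorm v
        _ ≤ 1 * ‖v‖ := by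
            rw [hna]; exact mul_le_mul_of_nonneg_right hTnorm (norm_nonneg v)
        _ = ‖v‖ := one_mul _
    have h2 : ⟪ContinuousLinearMap.adjoint T v, v⟫ = ‖v‖ ^ 2 := by
      rw [ContinuousLinearMap.adjoint_inner_left, hTv, real_inner_self_eq_norm_sq]
    have h3 : ‖ContinuousLinearMap.adjoint T v - v‖ ^ 2 ≤ 0 := by
      rw [norm_sub_sq_real, h2]
      nlinarith [norm_nonneg (ContinuousLinearMap.adjoint T v), norm_nonneg v]
    have h4 : ‖ContinuousLinearMap.adjoint T v - v‖ = 0 :=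
      pow_eq_zero_iff (n := 2) (by norm_num) |>.mp (le_antisymm h3 (by positivity))
    have h5 := norm_eq_zero.mp h4
    linear_combination (norm := abel) h5
  -- W is T-invariant
  have hinv : ∀ w ∈ W, T w ∈ W := by
    intro w hw
    rw [hW, Submodule.mem_orthogonal]
    intro v hv
    calc ⟪v, T w⟫ = ⟪ContinuousLinearMap.adjoint T v, w⟫ :=
          (ContinuousLinearMap.adjoint_inner_left T w v).symm
      _ = ⟪v, w⟫ := by rw [hadj v hv]
      _ = 0 := hw v hv
  -- decomposition
  have hdecomp : ∀ x, P x + Q x = x := fun x =>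
    Submodule.starProjection_add_starProjection_orthogonal (K := V) x
  have hPmem : ∀ x, P x ∈ V := fun x => (V.orthogonalProjectionOnto x).2
  have hQmem : ∀ x, Q x ∈ W := fun x => (W.orthogonalProjectionOnto x).2
  have hTP : ∀ x, T (P x) = P x := fun x => (hmemV _).mp (hPmem x)
  have hQid : ∀ w ∈ W, Q w = w := fun w hw =>
    Submodule.starProjection_eq_self_iff.mpr hw
  have hSW : ∀ w ∈ W, S w = T w := by
    intro w hw
    simp only [hS, ContinuousLinearMap.comp_apply]
    rw [show (W.subtypeL ∘L W.orthogonalProjectionOnto) w = Q w from rfl, hQid w hw]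
  -- ‖Q x‖ ≤ ‖x‖
  have hQle : ∀ x, ‖Q x‖ ≤ ‖x‖ := by
    intro x
    have h1 : ‖Q x‖ = ‖W.orthogonalProjectionOnto x‖ := rfl
    rw [h1]
    calc ‖W.orthogonalProjectionOnto x‖ ≤ ‖(W.orthogonalProjectionOnto : _ →L[ℝ] W)‖ * ‖x‖ :=
          (W.orthogonalProjectionOnto).le_opNorm x
      _ ≤ 1 * ‖x‖ := mul_le_mul_of_nonneg_right (Submodule.orthogonalProjectionOnto_norm_le W) (norm_nonneg x)
      _ = ‖x‖ := one_mul _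
  -- main induction
  have key : ∀ (x : EuclideanSpace ℝ (Fin n)) (k : ℕ),
      (T ^ k) x - P x ∈ W ∧ ‖(T ^ k) x - P x‖ ≤ ‖S‖ ^ k * ‖x - P x‖ := by
    intro x k
    induction k with
    | zero =>
        constructor
        · have : x - P x = Q x := by
            have := hdecomp x
            linear_combination (norm := abel) -this
          rw [pow_zero, ContinuousLinearMap.one_apply, this]
          exact hQmem x
        · rw [pow_zero, ContinuousLinearMap.one_apply, pow_zero, one_mul]
    | succ k ih =>
        obtain ⟨ihW, ihB⟩ := ih
        have hpow : (T ^ (k + 1)) x = T ((T ^ k) x) := by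
          rw [pow_succ', ContinuousLinearMap.mul_apply]
        have hstep : (T ^ (k + 1)) x - P x = T ((T ^ k) x - P x) := by
          rw [hpow, map_sub, hTP]
        constructor
        · rw [hstep]; exact hinv _ ihW
        · rw [hstep, ← hSW _ ihW]
          calc ‖S ((T ^ k) x - P x)‖ ≤ ‖S‖ * ‖(T ^ k) x - P x‖ := S.le_opNorm _
            _ ≤ ‖S‖ * (‖S‖ ^ k * ‖x - P x‖) :=
                mul_le_mul_of_nonneg_left ihB (norm_nonneg S)
            _ = ‖S‖ ^ (k + 1) * ‖x - P x‖ := by ring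
  -- ‖S x‖ < ‖x‖ on the unit sphere
  have hSlt : ∀ x : EuclideanSpace ℝ (Fin n), ‖x‖ = 1 → ‖S x‖ < 1 := by
    intro x hx
    by_cases h : Q x = 0
    · have : S x = 0 := by
        simp only [hS, ContinuousLinearMap.comp_apply]
        rw [show (W.subtypeL ∘L W.orthogonalProjectionOnto) x = Q x from rfl, h, map_zero]
      rw [this, norm_zero]; norm_num
    · have hQnotV : Q x ∉ V := by
        intro hmem
        apply h
        have h0 : ⟪Q x, Q x⟫ = 0 :=
          (Submodule.mem_orthogonal V (Q x)).mp (hQmem x) (Q x) hmem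
        exact inner_self_eq_zero.mp h0
      have hSx : S x = T (Q x) := rfl
      calc ‖S x‖ = ‖T (Q x)‖ := by rw [hSx]
        _ < ‖Q x‖ := hstrict _ hQnotV
        _ ≤ ‖x‖ := hQle x
        _ = 1 := hx
  -- ‖S‖ < 1
  have hSnorm : ‖S‖ < 1 := by
    rcases subsingleton_or_nontrivial (EuclideanSpace ℝ (Fin n)) with hsub | hnt
    · have hS0 : S = 0 := Subsingleton.elim _ _
      rw [hS0, norm_zero]; norm_num
    · obtain ⟨x₀, hx₀mem, hmax⟩ :=
        (isCompact_sphere (0 : EuclideanSpace ℝ (Fin n)) 1).exists_isMaxOn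
          (NormedSpace.sphere_nonempty.mpr zero_le_one)
          (continuous_norm.comp S.continuous).continuousOn
      have hx₀ : ‖x₀‖ = 1 := by simpa using mem_sphere_zero_iff_norm.mp hx₀mem
      have hle : ‖S‖ ≤ ‖S x₀‖ := by
        apply S.opNorm_le_bound (norm_nonneg _)
        intro x
        by_cases hx : x = 0
        · simp [hx]
        · have hxn : ‖x‖ ≠ 0 := norm_ne_zero_iff.mpr hx
          set u := ‖x‖⁻¹ • x with hu
          have hum : u ∈ Metric.sphere (0 : EuclideanSpace ℝ (Fin n)) 1 := by
            rw [mem_sphere_zero_iff_norm, hu, norm_smul, norm_inv, norm_norm,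
              inv_mul_cancel₀ hxn]
          have hub : ‖S u‖ ≤ ‖S x₀‖ := hmax hum
          have : S u = ‖x‖⁻¹ • S x := by rw [hu, map_smul]
          rw [this, norm_smul, norm_inv, norm_norm] at hub
          calc ‖S x‖ = ‖x‖ * (‖x‖⁻¹ * ‖S x‖) := by field_simp
            _ ≤ ‖x‖ * ‖S x₀‖ := by
                rw [mul_comm (‖x‖⁻¹)] at hub
                exact mul_le_mul_of_nonneg_left (by rw [mul_comm]; exact hub) (norm_nonneg x)
            _ = ‖S x₀‖ * ‖x‖ := mul_comm _ _
      exact lt_of_le_of_lt hle (hSlt x₀ hx₀)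
  refine ⟨hSnorm, ?_⟩
  intro x k
  exact (key x k).2
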